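/- Let T be a bounded totally paranormal operator and μ an isolated point of σ(T). Let E_μ be the Riesz projection of T at μ. Then the range of E_μ equals ker(T − μI). -/

import Mathlib

open Metric

section RieszAux

variable {H : Type*} [NormedAddCommGroup H] [NormedSpace ℂ H] [CompleteSpace H]

/-- The operator `∮ z in C(μ, r'), (z - μ)^n • (z - T)⁻¹`. -/
noncomputable def rK (T : H →L[ℂ] H) (μ : ℂ) (n : ℕ) (r' : ℝ) : H →L[ℂ] H :=
  ∮ z in C(μ, r'), (z - μ) ^ n • resolvent T z

lemma circleIntegral_push (L : (H →L[ℂ] H) →L[ℂ] (H →L[ℂ] H)) {f : ℂ → H →L[ℂ] H} {c : ℂ} {R : ℝ}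
    (hf : CircleIntegrable f c R) :
    L (∮ z in C(c, R), f z) = ∮ z in C(c, R), L (f z) := by
  simp only [circleIntegral]
  have hf' : IntervalIntegrable (fun θ => deriv (circleMap c R) θ • f (circleMap c R θ))
      MeasureTheory.volume 0 (2 * Real.pi) := (circleIntegrable_iff R).mp hf
  rw [← L.intervalIntegral_comp_comm
    (f := fun θ => deriv (circleMap c R) θ • f (circleMap c R θ)) hf']
  simp

lemma circleIntegral_apply {f : ℂ → H →L[ℂ] H} {c : ℂ} {R : ℝ}
    (hf : CircleIntegrable f c R) (x : H) :
    (∮ z in C(c, R), f z) x = ∮ z in C(c, R), f z x := by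
  simp only [circleIntegral]
  have hf' : IntervalIntegrable (fun θ => deriv (circleMap c R) θ • f (circleMap c R θ))
      MeasureTheory.volume 0 (2 * Real.pi) := (circleIntegrable_iff R).mp hf
  rw [show (∫ θ in (0:ℝ)..2 * Real.pi, deriv (circleMap c R) θ • f (circleMap c R θ)) x =
      (ContinuousLinearMap.apply ℂ H x) (∫ θ in (0:ℝ)..2 * Real.pi,
        deriv (circleMap c R) θ • f (circleMap c R θ)) from rfl,
    ← (ContinuousLinearMap.apply ℂ H x).intervalIntegral_comp_comm
      (f := fun θ => deriv (circleMap c R) θ • f (circleMap c R θ)) hf']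
  simp

lemma circleIntegral_comp_left (S : H →L[ℂ] H) {f : ℂ → H →L[ℂ] H} {c : ℂ} {R : ℝ}
    (hf : CircleIntegrable f c R) :
    S * (∮ z in C(c, R), f z) = ∮ z in C(c, R), S * f z := by
  have := circleIntegral_push (ContinuousLinearMap.mul ℂ (H →L[ℂ] H) S) hf
  simpa using this

lemma resolvent_contOn (T : H →L[ℂ] H) {s : Set ℂ} (hs : s ⊆ resolventSet ℂ T) :
    ContinuousOn (resolvent T) s := fun z hz =>
  ((spectrum.hasDerivAt_resolvent (hs hz)).differentiableAt.continuousAt).continuousWithinAt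

lemma rK_integrable (T : H →L[ℂ] H) (μ : ℂ) (n : ℕ) {r' : ℝ} (h1 : 0 ≤ r')
    (hs : sphere μ r' ⊆ resolventSet ℂ T) :
    CircleIntegrable (fun z => (z - μ) ^ n • resolvent T z) μ r' :=
  ContinuousOn.circleIntegrable h1 <|
    (((continuousOn_id.sub continuousOn_const).pow n).smul (resolvent_contOn T hs))

lemma norm_rK_le (T : H →L[ℂ] H) (μ : ℂ) (n : ℕ) {r' M : ℝ} (h1 : 0 ≤ r')
    (hM : ∀ z ∈ sphere μ r', ‖resolvent T z‖ ≤ M) :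
    ‖rK T μ n r'‖ ≤ 2 * Real.pi * r' * (r' ^ n * M) := by
  refine circleIntegral.norm_integral_le_of_norm_le_const h1 (fun z hz => ?_)
  rw [norm_smul ((z - μ) ^ n) (resolvent T z), norm_pow]
  have : ‖z - μ‖ = r' := by simpa [Complex.dist_eq] using hz
  rw [this]
  exact mul_le_mul_of_nonneg_left (hM z hz) (by positivity)

lemma S_mul_resolvent (T : H →L[ℂ] H) (μ : ℂ) {z : ℂ} (hz : z ∈ resolventSet ℂ T) :
    (T - μ • 1) * resolvent T z = (z - μ) • resolvent T z - 1 := by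
  have hu : IsUnit (algebraMap ℂ (H →L[ℂ] H) z - T) := hz
  have hdecomp : T - μ • (1 : H →L[ℂ] H)
      = (z - μ) • 1 - (algebraMap ℂ (H →L[ℂ] H) z - T) := by
    rw [Algebra.algebraMap_eq_smul_one, sub_smul]; abel
  rw [hdecomp, sub_mul, smul_mul_assoc, one_mul, resolvent, Ring.mul_inverse_cancel _ hu]

lemma S_mul_rK (T : H →L[ℂ] H) (μ : ℂ) (n : ℕ) {r' : ℝ} (h1 : 0 < r')
    (hs : sphere μ r' ⊆ resolventSet ℂ T) :
    (T - μ • 1) * rK T μ n r' = rK T μ (n + 1) r' := by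
  rw [rK, circleIntegral_comp_left _ (rK_integrable T μ n h1.le hs)]
  have heq : Set.EqOn (fun z => (T - μ • 1) * ((z - μ) ^ n • resolvent T z))
      (fun z => (z - μ) ^ (n + 1) • resolvent T z - (z - μ) ^ n • 1) (sphere μ r') := by
    intro z hz
    simp only [mul_smul_comm, S_mul_resolvent T μ (hs hz), smul_sub, pow_succ, mul_smul]
  have hint2 : CircleIntegrable (fun z : ℂ => (z - μ) ^ n • (1 : H →L[ℂ] H)) μ r' :=
    ContinuousOn.circleIntegrable h1.le
      ((((continuous_id.sub continuous_const).pow n).smul continuous_const).continuousOn)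
  rw [circleIntegral.integral_congr h1.le heq, circleIntegral.integral_sub
    (rK_integrable T μ (n+1) h1.le hs) hint2, circleIntegral.integral_smul_const]
  have hzero : (∮ z in C(μ, r'), (z - μ) ^ n) = 0 := by
    have := circleIntegral.integral_sub_zpow_of_ne (n := (n : ℤ)) (by omega) μ μ r'
    simpa [zpow_natCast] using this
  rw [hzero, zero_smul, sub_zero, rK]

lemma rK_eq (T : H →L[ℂ] H) (μ : ℂ) (n : ℕ) {r' r : ℝ} (h1 : 0 < r') (h2 : r' ≤ r)
    (hres : ∀ z ∈ closedBall μ r, z ≠ μ → z ∈ resolventSet ℂ T) :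
    rK T μ n r = rK T μ n r' := by
  refine Complex.circleIntegral_eq_of_differentiable_on_annulus_off_countable h1 h2
    Set.countable_empty ?_ ?_
  · refine (((continuous_id.sub continuous_const).pow n).continuousOn).smul
      (resolvent_contOn T ?_)
    intro z hz
    refine hres z hz.1 (fun h => ?_)
    have := hz.2
    simp [h, mem_ball, h1] at this
  · intro z hz
    have hz' : z ∈ resolventSet ℂ T := by
      refine hres z (ball_subset_closedBall hz.1.1) (fun h => ?_)
      have := hz.1.2
      simp [h, mem_closedBall, h1.le] at this
    exact ((differentiableAt_id.sub_const μ).pow n).smul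
      (spectrum.hasDerivAt_resolvent hz').differentiableAt

lemma pow_mul_rK (T : H →L[ℂ] H) (μ : ℂ) (n : ℕ) {r' : ℝ} (h1 : 0 < r')
    (hs : sphere μ r' ⊆ resolventSet ℂ T) :
    (T - μ • 1) ^ n * rK T μ 0 r' = rK T μ n r' := by
  induction n with
  | zero => simp
  | succ m ih => rw [pow_succ', mul_assoc, ih, S_mul_rK T μ m h1 hs]

lemma para_seq {a : ℕ → ℝ} (hconv : ∀ n, a (n + 1) ^ 2 ≤ a (n + 2) * a n)
    (hnn : ∀ n, 0 ≤ a n) (h0 : 0 < a 0) (h1 : 0 < a 1) :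
    ∀ n, a 0 * (a 1 / a 0) ^ n ≤ a n := by
  have hpos : ∀ n, 0 < a n ∧ 0 < a (n + 1) := by
    intro n
    induction n with
    | zero => exact ⟨h0, h1⟩
    | succ m ih =>
      refine ⟨ih.2, ?_⟩
      by_contra h
      have ha2 : a (m + 2) = 0 := le_antisymm (by linarith [hnn (m + 2)]) (hnn (m + 2))
      have := hconv m
      rw [ha2, zero_mul] at this
      nlinarith [ih.2]
  have hratio : ∀ n, a 1 / a 0 ≤ a (n + 1) / a n := by
    intro n
    induction n with
    | zero => exact le_refl _
    | succ m ih =>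
      refine le_trans ih ?_
      rw [div_le_div_iff₀ (hpos m).1 (hpos (m + 1)).1]
      nlinarith [hconv m]
  intro n
  induction n with
  | zero => simp
  | succ m ih =>
    calc a 0 * (a 1 / a 0) ^ (m + 1) = (a 0 * (a 1 / a 0) ^ m) * (a 1 / a 0) := by ring
    _ ≤ a m * (a (m + 1) / a m) := by
        refine mul_le_mul ih (hratio m) (by positivity) (hnn m)
    _ = a (m + 1) := by rw [mul_comm]; exact div_mul_cancel₀ _ (hpos m).1.ne'

lemma resolvent_apply_ker (T : H →L[ℂ] H) (μ : ℂ) {z : ℂ} (hz : z ∈ resolventSet ℂ T)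
    {y : H} (hy : (T - μ • 1) y = 0) (hzμ : z ≠ μ) :
    resolvent T z y = (z - μ)⁻¹ • y := by
  have hu : IsUnit (algebraMap ℂ (H →L[ℂ] H) z - T) := hz
  have hTy : T y = μ • y := by
    have := hy
    simp only [ContinuousLinearMap.sub_apply, ContinuousLinearMap.smul_apply,
      ContinuousLinearMap.one_apply, sub_eq_zero] at this
    exact this
  have key : (algebraMap ℂ (H →L[ℂ] H) z - T) ((z - μ)⁻¹ • y) = y := by
    rw [Algebra.algebraMap_eq_smul_one]
    simp only [ContinuousLinearMap.sub_apply, ContinuousLinearMap.smul_apply,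
      ContinuousLinearMap.one_apply, map_smul, hTy, smul_smul]
    rw [← sub_smul, smul_smul, inv_mul_cancel₀ (sub_ne_zero.mpr hzμ), one_smul]
  calc resolvent T z y
      = resolvent T z ((algebraMap ℂ (H →L[ℂ] H) z - T) ((z - μ)⁻¹ • y)) := by rw [key]
    _ = ((Ring.inverse (algebraMap ℂ (H →L[ℂ] H) z - T)) *
          (algebraMap ℂ (H →L[ℂ] H) z - T)) ((z - μ)⁻¹ • y) := rfl
    _ = (z - μ)⁻¹ • y := by rw [Ring.inverse_mul_cancel _ hu]; simp

end RieszAux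

theorem stmt_10 {H : Type*} [NormedAddCommGroup H] [InnerProductSpace ℂ H]
    [CompleteSpace H] (T : H →L[ℂ] H)
    (hT : ∀ (lam : ℂ) (x : H),
      ‖(T - lam • 1) x‖ ^ 2 ≤ ‖((T - lam • 1) ∘L (T - lam • 1)) x‖ * ‖x‖)
    (μ : ℂ) (hμ : μ ∈ spectrum ℂ T)
    (r : ℝ) (hr : 0 < r)
    (hsep : Metric.closedBall μ r ∩ spectrum ℂ T = {μ})
    (E : H →L[ℂ] H)
    (hE : E = ((2 * Real.pi * Complex.I)⁻¹ : ℂ) •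
      (∮ z in C(μ, r), Ring.inverse (z • (1 : H →L[ℂ] H) - T))) :
    LinearMap.range (E : H →ₗ[ℂ] H) = LinearMap.ker ((T - μ • 1 : H →L[ℂ] H) : H →ₗ[ℂ] H) := by
  -- every point of the closed ball except μ is in the resolvent set
  have hres : ∀ z ∈ closedBall μ r, z ≠ μ → z ∈ resolventSet ℂ T := by
    intro z hzball hne
    have hzn : z ∉ spectrum ℂ T := by
      intro hz'
      have hmem : z ∈ ({μ} : Set ℂ) := by rw [← hsep]; exact ⟨hzball, hz'⟩
      exact hne hmem
    exact spectrum.notMem_iff.mp hzn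
  have hsphere : ∀ {r' : ℝ}, 0 < r' → r' ≤ r → sphere μ r' ⊆ resolventSet ℂ T := by
    intro r' h1 h2 z hz
    have hdz : dist z μ = r' := hz
    refine hres z (by rw [mem_closedBall, hdz]; exact h2) (fun h => ?_)
    rw [h, dist_self] at hdz
    exact h1.ne hdz
  have h2pin : (2 * Real.pi * Complex.I : ℂ) ≠ 0 := by
    simp [Real.pi_ne_zero, Complex.I_ne_zero, Complex.ofReal_ne_zero]
  have hEK : E = ((2 * Real.pi * Complex.I)⁻¹ : ℂ) • rK T μ 0 r := by
    rw [hE, rK]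
    congr 1
    congr 1
    funext z
    simp [resolvent, Algebra.algebraMap_eq_smul_one]
  apply le_antisymm
  · -- range E ⊆ ker (T - μ)
    rintro y hy
    obtain ⟨x, rfl⟩ := LinearMap.mem_range.mp hy
    rw [LinearMap.mem_ker]
    -- the sequence of norms
    set S : H →L[ℂ] H := T - μ • 1 with hSdef
    set a : ℕ → ℝ := fun n => ‖(S ^ n) (E x)‖ with ha
    have hnn : ∀ n, 0 ≤ a n := fun n => norm_nonneg _
    have hconv : ∀ n, a (n + 1) ^ 2 ≤ a (n + 2) * a n := by
      intro n
      have := hT μ ((S ^ n) (E x))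
      have e1 : (T - μ • 1) ((S ^ n) (E x)) = (S ^ (n + 1)) (E x) := by
        rw [pow_succ', ContinuousLinearMap.mul_apply]
      have e2 : ((T - μ • 1) ∘L (T - μ • 1)) ((S ^ n) (E x)) = (S ^ (n + 2)) (E x) := by
        rw [ContinuousLinearMap.comp_apply, show n + 2 = (n + 1) + 1 from rfl,
          pow_succ', ContinuousLinearMap.mul_apply, pow_succ', ContinuousLinearMap.mul_apply]
      rw [e1, e2] at this
      exact this
    -- norm bound on a n coming from the contour integral over radius r'
    have hbound : ∀ r' : ℝ, 0 < r' → r' ≤ r → ∃ D : ℝ, 0 ≤ D ∧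
        ∀ n, a n ≤ r' ^ n * D := by
      intro r' h1 h2
      obtain ⟨z0, hz0, hz0max⟩ := (isCompact_sphere μ r').exists_isMaxOn
        (NormedSpace.sphere_nonempty.mpr h1.le)
        ((resolvent_contOn T (hsphere h1 h2)).norm)
      set M : ℝ := ‖resolvent T z0‖ with hM
      have hMnn : 0 ≤ M := norm_nonneg _
      refine ⟨r' * M * ‖x‖, by positivity, fun n => ?_⟩
      have hSnE : S ^ n * E = ((2 * Real.pi * Complex.I)⁻¹ : ℂ) • rK T μ n r' := by
        rw [hEK, mul_smul_comm, pow_mul_rK T μ n hr (hsphere hr le_rfl),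
          rK_eq T μ n h1 h2 hres]
      have happ : (S ^ n) (E x) = (((2 * Real.pi * Complex.I)⁻¹ : ℂ) • rK T μ n r') x := by
        rw [← hSnE, ContinuousLinearMap.mul_apply]
      have hnorm : a n = ‖(((2 * Real.pi * Complex.I)⁻¹ : ℂ) • rK T μ n r') x‖ := by
        rw [ha]; simp only []; rw [happ]
      rw [hnorm, ContinuousLinearMap.smul_apply, norm_smul]
      have h2pi : ‖((2 * Real.pi * Complex.I)⁻¹ : ℂ)‖ = (2 * Real.pi)⁻¹ := by
        rw [norm_inv, norm_mul, norm_mul, Complex.norm_I, mul_one, Complex.norm_real]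
        simp [abs_of_pos Real.pi_pos]
      rw [h2pi]
      have hKn : ‖rK T μ n r' x‖ ≤ (2 * Real.pi * r' * (r' ^ n * M)) * ‖x‖ :=
        le_trans ((rK T μ n r').le_opNorm x)
          (mul_le_mul_of_nonneg_right
            (norm_rK_le T μ n h1.le (fun z hz => hz0max hz)) (norm_nonneg x))
      calc (2 * Real.pi)⁻¹ * ‖rK T μ n r' x‖
          ≤ (2 * Real.pi)⁻¹ * ((2 * Real.pi * r' * (r' ^ n * M)) * ‖x‖) := by
            exact mul_le_mul_of_nonneg_left hKn (by positivity)
        _ = r' ^ n * (r' * M * ‖x‖) := by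
            field_simp
    -- conclude S (E x) = 0
    by_contra hne
    have h1pos : 0 < a 1 := by
      have : (0:ℝ) < ‖(S ^ 1) (E x)‖ := by
        rw [pow_one]
        exact norm_pos_iff.mpr hne
      exact this
    have h0pos : 0 < a 0 := by
      rcases eq_or_lt_of_le (hnn 0) with h | h
      · exfalso
        have : E x = 0 := by
          have := h.symm
          rw [ha] at this
          simpa using this
        rw [ha] at h1pos
        simp only [this, pow_one, map_zero, norm_zero] at h1pos
        exact lt_irrefl 0 h1pos
      · exact h
    have hgrow := para_seq hconv hnn h0pos h1pos
    -- for every small radius r', a 1 ≤ r' * a 0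
    have hsmall : ∀ r' : ℝ, 0 < r' → r' ≤ r → a 1 ≤ r' * a 0 := by
      intro r' h1 h2
      obtain ⟨D, hD, hDb⟩ := hbound r' h1 h2
      by_contra hgt
      push_neg at hgt
      have hq : 1 < (a 1 / a 0) / r' := by
        rw [lt_div_iff₀ h1, one_mul, lt_div_iff₀ h0pos]
        exact hgt
      obtain ⟨n, hn⟩ := pow_unbounded_of_one_lt (D / a 0) hq
      have hle : ((a 1 / a 0) / r') ^ n ≤ D / a 0 := by
        rw [div_pow, div_le_div_iff₀ (by positivity) h0pos]
        calc (a 1 / a 0) ^ n * a 0 = a 0 * (a 1 / a 0) ^ n := by ring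
          _ ≤ a n := hgrow n
          _ ≤ r' ^ n * D := hDb n
          _ = D * r' ^ n := by ring
      exact absurd hle (not_le.mpr hn)
    -- take r' → 0
    have hfinal : a 1 ≤ (min r (a 1 / (2 * a 0))) * a 0 :=
      hsmall _ (lt_min hr (by positivity)) (min_le_left _ _)
    have : (min r (a 1 / (2 * a 0))) * a 0 ≤ a 1 / 2 := by
      calc (min r (a 1 / (2 * a 0))) * a 0 ≤ (a 1 / (2 * a 0)) * a 0 :=
            mul_le_mul_of_nonneg_right (min_le_right _ _) h0pos.le
        _ = a 1 / 2 := by field_simp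
    linarith
  · -- ker (T - μ) ⊆ range E
    intro y hy
    have hy' : (T - μ • 1) y = 0 := LinearMap.mem_ker.mp hy
    rw [LinearMap.mem_range]
    refine ⟨y, ?_⟩
    have hint : CircleIntegrable (fun z => (z - μ) ^ 0 • resolvent T z) μ r :=
      rK_integrable T μ 0 hr.le (hsphere hr le_rfl)
    rw [hEK, ContinuousLinearMap.coe_coe, ContinuousLinearMap.smul_apply, rK, circleIntegral_apply hint y]
    have heq : Set.EqOn (fun z => ((z - μ) ^ 0 • resolvent T z) y)
        (fun z => (z - μ)⁻¹ • y) (sphere μ r) := by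
      intro z hz
      have hzres : z ∈ resolventSet ℂ T := hsphere hr le_rfl hz
      have hzne : z ≠ μ := by
        intro h
        have hdz : dist z μ = r := hz
        rw [h, dist_self] at hdz
        exact hr.ne hdz
      simp only [pow_zero, one_smul, ContinuousLinearMap.smul_apply]
      exact resolvent_apply_ker T μ hzres hy' hzne
    rw [circleIntegral.integral_congr hr.le heq, circleIntegral.integral_smul_const,
      circleIntegral.integral_sub_inv_of_mem_ball (by simpa [mem_ball] using hr),
      smul_smul, inv_mul_cancel₀ h2pin, one_smul]
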